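/- arXiv:1002.0007 — 2 statements merged into one kernel-verified Lean document; each statement's English description precedes it below -/
import Mathlib

section
/- Let (X,d) be a proper geodesic metric space and let ν be a Borel measure on X whose support is all of X and which is finite on bounded sets, satisfying the Bishop–Gromov inequality with parameters (K,N), where K ≤ 0 and 1 < N < ∞. Suppose the non-collapsing condition holds: there exist r₀, V₀, V₁ > 0 with V₀ ≤ ν(B(x,r₀)) ≤ V₁ for all x ∈ X. Let ε > 0, let 𝒩 be a maximal ε-separated net in X with discretization graph G(𝒩), and fix basepoints x₀ ∈ X and p₀ ∈ 𝒩. Then (X,d,ν) has exponential volume growth if and only if G(𝒩) has exponential growth. -/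
open MeasureTheory Metric

/-- The model volume density `S_K^N` for `K ≤ 0`, `1 < N < ∞`. -/
noncomputable def SKN (K N t : ℝ) : ℝ :=
  if K = 0 then t ^ (N - 1)
  else Real.sinh (Real.sqrt (|K| / (N - 1)) * t) ^ (N - 1)

/-- A Borel measure `ν` of full support satisfies the Bishop–Gromov inequality with
parameters `(K, N)` if for every `x` the function
`r ↦ ν(B(x,r)) / ∫₀^r S_K^N(t) dt` is nonincreasing on `(0, ∞)`. -/
def BishopGromov {X : Type*} [MetricSpace X] [MeasurableSpace X]
    (ν : Measure X) (K N : ℝ) : Prop :=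
  ∀ x : X, AntitoneOn
    (fun r => (ν (ball x r)).toReal / ∫ t in (0:ℝ)..r, SKN K N t) (Set.Ioi 0)

/-- A metric space is geodesic if every pair of points is joined by a geodesic
(an isometric image of a real interval). -/
def IsGeodesicSpace (X : Type*) [MetricSpace X] : Prop :=
  ∀ x y : X, ∃ f : ℝ → X, f 0 = x ∧ f (dist x y) = y ∧
    ∀ s ∈ Set.Icc (0:ℝ) (dist x y), ∀ t ∈ Set.Icc (0:ℝ) (dist x y),
      dist (f s) (f t) = |s - t|

/-- A subset `𝒩` of a metric space is `ε`-separated if distinct points of `𝒩` are at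
distance at least `ε`. -/
def IsSeparated {X : Type*} [MetricSpace X] (𝒩 : Set X) (ε : ℝ) : Prop :=
  ∀ p ∈ 𝒩, ∀ q ∈ 𝒩, p ≠ q → ε ≤ dist p q

/-- A maximal `ε`-separated net: an `ε`-separated set maximal with respect to inclusion. -/
def IsMaximalNet {X : Type*} [MetricSpace X] (𝒩 : Set X) (ε : ℝ) : Prop :=
  IsSeparated 𝒩 ε ∧ ∀ M : Set X, 𝒩 ⊆ M → IsSeparated M ε → M = 𝒩

/-- The discretization graph `G(𝒩)`: vertices are points of `𝒩`, and distinct `p, q`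
are adjacent iff `B(p,ε) ∩ B(q,ε) ≠ ∅`, equivalently `dist p q < 2ε`. -/
def netGraph {X : Type*} [MetricSpace X] (𝒩 : Set X) (ε : ℝ) : SimpleGraph 𝒩 where
  Adj p q := p ≠ q ∧ dist (p : X) (q : X) < 2 * ε
  symm := by
    constructor
    intro p q h
    exact ⟨h.1.symm, by rw [dist_comm]; exact h.2⟩
  loopless := by
    constructor
    intro p h
    exact h.1 rfl

/-- A connected graph with basepoint `v₀` has polynomial growth if the cardinality of
combinatorial balls is eventually bounded by `C·r^k`. -/
def GraphPolyGrowth {V : Type*} (G : SimpleGraph V) (v₀ : V) : Prop :=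
  ∃ C > (0:ℝ), ∃ k > (0:ℝ), ∃ r₁ > (0:ℝ), ∀ r : ℝ, r₁ ≤ r →
    (({v : V | (G.dist v₀ v : ℝ) ≤ r}.ncard : ℝ)) ≤ C * r ^ k

/-- A connected graph with basepoint `v₀` has exponential growth if
`limsup_{r→∞} (1/r)·log #{v : 𝐝(v₀,v) ≤ r} > 0`. -/
def GraphExpGrowth {V : Type*} (G : SimpleGraph V) (v₀ : V) : Prop :=
  0 < Filter.limsup
    (fun r : ℝ => Real.log (({v : V | (G.dist v₀ v : ℝ) ≤ r}.ncard : ℝ)) / r)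
    Filter.atTop

/-- A metric measure space with basepoint `x₀` has polynomial volume growth if
`ν(B(x₀,r)) ≤ C·r^k` for all sufficiently large `r`. -/
def VolumePolyGrowth {X : Type*} [MetricSpace X] [MeasurableSpace X]
    (ν : Measure X) (x₀ : X) : Prop :=
  ∃ C > (0:ℝ), ∃ k > (0:ℝ), ∃ r₁ > (0:ℝ), ∀ r : ℝ, r₁ ≤ r →
    (ν (ball x₀ r)).toReal ≤ C * r ^ k

/-- A metric measure space with basepoint `x₀` has exponential volume growth if
`limsup_{r→∞} (1/r)·log ν(B(x₀,r)) > 0`. -/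
def VolumeExpGrowth {X : Type*} [MetricSpace X] [MeasurableSpace X]
    (ν : Measure X) (x₀ : X) : Prop :=
  0 < Filter.limsup (fun r : ℝ => Real.log (ν (ball x₀ r)).toReal / r) Filter.atTop

namespace StmtAux

lemma skn_nonneg {K N : ℝ} {t : ℝ} (ht : 0 ≤ t) : 0 ≤ SKN K N t := by
  unfold SKN
  split_ifs
  · exact Real.rpow_nonneg ht _
  · refine Real.rpow_nonneg ?_ _
    exact Real.sinh_nonneg_iff.2 (mul_nonneg (Real.sqrt_nonneg _) ht)

lemma skn_pos {K N : ℝ} (hK : K ≤ 0) (hN : 1 < N) {t : ℝ} (ht : 0 < t) : 0 < SKN K N t := by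
  unfold SKN
  split_ifs with h
  · exact Real.rpow_pos_of_pos ht _
  · refine Real.rpow_pos_of_pos ?_ _
    refine Real.sinh_pos_iff.2 (mul_pos ?_ ht)
    exact Real.sqrt_pos.2 (div_pos (abs_pos.2 h) (by linarith))

lemma skn_continuousOn {K N : ℝ} (hN : 1 < N) : ContinuousOn (SKN K N) (Set.Ici 0) := by
  unfold SKN
  split_ifs with h
  · intro t _
    exact (Real.continuousAt_rpow_const t _ (Or.inr (by linarith))).continuousWithinAt
  · refine Continuous.continuousOn ?_
    have h1 : Continuous fun t : ℝ => Real.sinh (Real.sqrt (|K| / (N - 1)) * t) :=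
      Real.continuous_sinh.comp (continuous_const.mul continuous_id)
    refine continuous_iff_continuousAt.2 (fun t => ?_)
    exact (Real.continuousAt_rpow_const _ _ (Or.inr (by linarith))).comp h1.continuousAt

lemma skn_mono {K N : ℝ} (hN : 1 < N) : MonotoneOn (SKN K N) (Set.Ici 0) := by
  intro a ha b hb hab
  unfold SKN
  split_ifs
  · exact Real.rpow_le_rpow ha hab (by linarith)
  · refine Real.rpow_le_rpow (Real.sinh_nonneg_iff.2 (mul_nonneg (Real.sqrt_nonneg _) ha)) ?_ (by linarith)
    exact Real.sinh_le_sinh.2 (mul_le_mul_of_nonneg_left hab (Real.sqrt_nonneg _))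

lemma sinh_le_exp (x : ℝ) : Real.sinh x ≤ Real.exp x := by
  rw [Real.sinh_eq]
  have := Real.exp_pos (-x)
  have := Real.exp_pos x
  linarith

lemma skn_le_exp {K N : ℝ} (hN : 1 < N) {t : ℝ} (ht : 0 ≤ t) :
    SKN K N t ≤ Real.exp ((N - 1) * (1 + Real.sqrt (|K| / (N - 1))) * t) := by
  have hN1 : (0:ℝ) ≤ N - 1 := by linarith
  have hs : (0:ℝ) ≤ Real.sqrt (|K| / (N - 1)) := Real.sqrt_nonneg _
  unfold SKN
  split_ifs
  · calc t ^ (N-1) ≤ (Real.exp t) ^ (N-1) := by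
          exact Real.rpow_le_rpow ht (by linarith [Real.add_one_le_exp t]) hN1
    _ = Real.exp (t * (N-1)) := (Real.exp_mul t (N-1)).symm
    _ ≤ Real.exp ((N - 1) * (1 + Real.sqrt (|K| / (N - 1))) * t) := by
          refine Real.exp_le_exp.2 ?_
          nlinarith [mul_nonneg (mul_nonneg hN1 hs) ht]
  · calc Real.sinh (Real.sqrt (|K| / (N - 1)) * t) ^ (N-1)
        ≤ (Real.exp (Real.sqrt (|K| / (N - 1)) * t)) ^ (N-1) := by
          refine Real.rpow_le_rpow (Real.sinh_nonneg_iff.2 (mul_nonneg hs ht)) (sinh_le_exp _) hN1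
    _ = Real.exp ((Real.sqrt (|K| / (N - 1)) * t) * (N-1)) := (Real.exp_mul _ _).symm
    _ ≤ _ := by
          refine Real.exp_le_exp.2 ?_
          nlinarith [mul_nonneg hN1 ht, mul_nonneg (mul_nonneg hN1 hs) ht]


noncomputable def cexp (K N : ℝ) : ℝ := (N - 1) * (1 + Real.sqrt (|K| / (N - 1)))

lemma cexp_nonneg {K N : ℝ} (hN : 1 < N) : 0 ≤ cexp K N :=
  mul_nonneg (by linarith) (by positivity)

noncomputable def Ikn (K N r : ℝ) : ℝ := ∫ t in (0:ℝ)..r, SKN K N t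

lemma ikn_integrable {K N : ℝ} (hN : 1 < N) {a b : ℝ} (ha : 0 ≤ a) (hb : 0 ≤ b) :
    IntervalIntegrable (SKN K N) MeasureTheory.volume a b := by
  refine ((skn_continuousOn hN).mono ?_).intervalIntegrable
  intro x hx
  rcases Set.mem_uIcc.1 hx with h | h
  · exact le_trans ha h.1
  · exact le_trans hb h.1

lemma ikn_pos {K N : ℝ} (hK : K ≤ 0) (hN : 1 < N) {r : ℝ} (hr : 0 < r) : 0 < Ikn K N r :=
  intervalIntegral.intervalIntegral_pos_of_pos_on (ikn_integrable hN le_rfl hr.le)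
    (fun x hx => skn_pos hK hN hx.1) hr

lemma ikn_mono {K N : ℝ} (hN : 1 < N) {a b : ℝ} (ha : 0 ≤ a) (hab : a ≤ b) :
    Ikn K N a ≤ Ikn K N b := by
  have hb : 0 ≤ b := le_trans ha hab
  have key : Ikn K N a + ∫ t in a..b, SKN K N t = Ikn K N b :=
    intervalIntegral.integral_add_adjacent_intervals (ikn_integrable hN le_rfl ha)
      (ikn_integrable hN ha hb)
  have pos : 0 ≤ ∫ t in a..b, SKN K N t :=
    intervalIntegral.integral_nonneg hab (fun u hu => skn_nonneg (le_trans ha hu.1))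
  linarith

lemma ikn_le_exp {K N : ℝ} (hN : 1 < N) {r : ℝ} (hr : 0 ≤ r) :
    Ikn K N r ≤ r * Real.exp (cexp K N * r) := by
  have h1 : Ikn K N r ≤ ∫ _ in (0:ℝ)..r, Real.exp (cexp K N * r) := by
    refine intervalIntegral.integral_mono_on hr (ikn_integrable hN le_rfl hr)
      intervalIntegrable_const (fun x hx => ?_)
    refine le_trans (skn_le_exp hN hx.1) (Real.exp_le_exp.2 ?_)
    exact mul_le_mul_of_nonneg_left hx.2 (cexp_nonneg hN)
  simpa using h1


section BG
variable {X : Type*} [MetricSpace X] [MeasurableSpace X] [BorelSpace X]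
variable {ν : Measure X} {K N : ℝ}

lemma nu_ne_top (hbdd : ∀ s : Set X, Bornology.IsBounded s → ν s < ⊤) (x : X) (r : ℝ) :
    ν (ball x r) ≠ ⊤ := (hbdd _ isBounded_ball).ne

lemma mu_mono (hbdd : ∀ s : Set X, Bornology.IsBounded s → ν s < ⊤) (x : X) {r R : ℝ}
    (h : r ≤ R) : (ν (ball x r)).toReal ≤ (ν (ball x R)).toReal :=
  (ENNReal.toReal_le_toReal (nu_ne_top hbdd x r) (nu_ne_top hbdd x R)).2
    (measure_mono (ball_subset_ball h))

lemma mu_pos (hfull : ∀ x : X, ∀ r > (0:ℝ), 0 < ν (ball x r))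
    (hbdd : ∀ s : Set X, Bornology.IsBounded s → ν s < ⊤) (x : X) {r : ℝ} (hr : 0 < r) :
    0 < (ν (ball x r)).toReal :=
  ENNReal.toReal_pos (hfull x r hr).ne' (nu_ne_top hbdd x r)

lemma bg_mul (hK : K ≤ 0) (hN : 1 < N) (hBG : BishopGromov ν K N) (x : X) {s t : ℝ}
    (hs : 0 < s) (hst : s ≤ t) :
    (ν (ball x t)).toReal * Ikn K N s ≤ (ν (ball x s)).toReal * Ikn K N t := by
  have ht : 0 < t := lt_of_lt_of_le hs hst
  have h := hBG x (Set.mem_Ioi.2 hs) (Set.mem_Ioi.2 ht) hst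
  have hIs := ikn_pos hK hN hs
  have hIt := ikn_pos hK hN ht
  simp only [] at h
  rw [show (∫ u in (0:ℝ)..t, SKN K N u) = Ikn K N t from rfl,
      show (∫ u in (0:ℝ)..s, SKN K N u) = Ikn K N s from rfl,
      div_le_div_iff₀ hIt hIs] at h
  linarith

end BG

section Cov
variable {X : Type*} [MetricSpace X] {𝒩 : Set X} {ε : ℝ}

lemma covering (hnet : IsMaximalNet 𝒩 ε) (hε : 0 < ε) (x : X) :
    ∃ p ∈ 𝒩, dist x p < ε := by
  by_contra hcon
  push_neg at hcon
  have hx : x ∉ 𝒩 := by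
    intro hx
    have := hcon x hx
    simp at this
    linarith
  have hsep : IsSeparated (insert x 𝒩) ε := by
    intro p hp q hq hpq
    rcases Set.mem_insert_iff.1 hp with hpx | hp'
    · rcases Set.mem_insert_iff.1 hq with hqx | hq'
      · exact absurd (hpx.trans hqx.symm) hpq
      · subst hpx; exact hcon q hq'
    · rcases Set.mem_insert_iff.1 hq with hqx | hq'
      · subst hqx; rw [dist_comm]; exact hcon p hp'
      · exact hnet.1 p hp' q hq' hpq
  have := hnet.2 (insert x 𝒩) (Set.subset_insert _ _) hsep
  exact hx (this ▸ Set.mem_insert x 𝒩)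

end Cov

section Net
variable {X : Type*} [MetricSpace X] [MeasurableSpace X] [BorelSpace X]
variable {ν : Measure X} {K N : ℝ} {𝒩 : Set X} {ε : ℝ}

lemma packing_finset (hnet : IsMaximalNet 𝒩 ε) (hε : 0 < ε)
    (hbdd : ∀ s : Set X, Bornology.IsBounded s → ν s < ⊤)
    {s₀ : ℝ} (hs₀ : 0 < s₀) (hs₀' : s₀ ≤ ε / 2) {VL : ℝ}
    (hVL : ∀ x : X, VL ≤ (ν (ball x s₀)).toReal)
    (x : X) (R : ℝ) (T : Finset X) (hT : ↑T ⊆ 𝒩 ∩ closedBall x R) :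
    (T.card : ℝ) * VL ≤ (ν (ball x (R + s₀))).toReal := by
  have hdisj : (↑T : Set X).PairwiseDisjoint (fun p => ball p s₀) := by
    intro p hp q hq hpq
    have hsep := hnet.1 p (hT hp).1 q (hT hq).1 hpq
    refine Set.disjoint_left.2 (fun z hzp hzq => ?_)
    have : dist p q ≤ dist z p + dist z q := by
      rw [dist_comm z p]; exact dist_triangle p z q
    simp only [mem_ball] at hzp hzq
    linarith
  have hmeas : ν (⋃ p ∈ T, ball p s₀) = ∑ p ∈ T, ν (ball p s₀) :=
    measure_biUnion_finset hdisj (fun p _ => measurableSet_ball)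
  have hsub : (⋃ p ∈ T, ball p s₀) ⊆ ball x (R + s₀) := by
    intro z hz
    rcases Set.mem_iUnion₂.1 hz with ⟨p, hp, hzp⟩
    have h1 : dist p x ≤ R := (hT hp).2
    have h2 : dist z p < s₀ := mem_ball.1 hzp
    have : dist z x ≤ dist z p + dist p x := dist_triangle z p x
    exact mem_ball.2 (by linarith)
  have h1 : (∑ p ∈ T, ν (ball p s₀)).toReal ≤ (ν (ball x (R + s₀))).toReal := by
    rw [← hmeas]
    exact (ENNReal.toReal_le_toReal (((measure_mono hsub).trans_lt
      (hbdd _ isBounded_ball)).ne) (nu_ne_top hbdd x _)).2 (measure_mono hsub)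
  have h2 : (∑ p ∈ T, ν (ball p s₀)).toReal = ∑ p ∈ T, (ν (ball p s₀)).toReal :=
    ENNReal.toReal_sum (fun p _ => nu_ne_top hbdd p s₀)
  have h3 : (T.card : ℝ) * VL ≤ ∑ p ∈ T, (ν (ball p s₀)).toReal := by
    calc (T.card : ℝ) * VL = ∑ _p ∈ T, VL := by rw [Finset.sum_const, nsmul_eq_mul]
    _ ≤ ∑ p ∈ T, (ν (ball p s₀)).toReal := Finset.sum_le_sum (fun p _ => hVL p)
  linarith [h2 ▸ h1]

lemma net_finite (hnet : IsMaximalNet 𝒩 ε) (hε : 0 < ε)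
    (hbdd : ∀ s : Set X, Bornology.IsBounded s → ν s < ⊤)
    {s₀ : ℝ} (hs₀ : 0 < s₀) (hs₀' : s₀ ≤ ε / 2) {VL : ℝ} (hVLpos : 0 < VL)
    (hVL : ∀ x : X, VL ≤ (ν (ball x s₀)).toReal)
    (x : X) (R : ℝ) : (𝒩 ∩ closedBall x R).Finite := by
  by_contra hinf
  have hinf : (𝒩 ∩ closedBall x R).Infinite := hinf
  set B := (ν (ball x (R + s₀))).toReal with hB
  obtain ⟨T, hT, hcard⟩ := hinf.exists_subset_card_eq (⌈B / VL⌉₊ + 1)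
  have h1 := packing_finset hnet hε hbdd hs₀ hs₀' hVL x R T hT
  rw [hcard] at h1
  have h2 : (((⌈B / VL⌉₊ : ℕ) + 1 : ℕ) : ℝ) ≤ B / VL := by
    rw [le_div_iff₀ hVLpos]; exact_mod_cast h1
  have h3 := Nat.le_ceil (B / VL)
  push_cast at h2
  linarith

lemma net_ncard (hnet : IsMaximalNet 𝒩 ε) (hε : 0 < ε)
    (hbdd : ∀ s : Set X, Bornology.IsBounded s → ν s < ⊤)
    {s₀ : ℝ} (hs₀ : 0 < s₀) (hs₀' : s₀ ≤ ε / 2) {VL : ℝ} (hVLpos : 0 < VL)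
    (hVL : ∀ x : X, VL ≤ (ν (ball x s₀)).toReal)
    (x : X) (R : ℝ) {S : Set X} (hS : S ⊆ 𝒩 ∩ closedBall x R) :
    (S.ncard : ℝ) * VL ≤ (ν (ball x (R + s₀))).toReal := by
  have hfin : S.Finite := (net_finite hnet hε hbdd hs₀ hs₀' hVLpos hVL x R).subset hS
  have h1 := packing_finset hnet hε hbdd hs₀ hs₀' hVL x R hfin.toFinset
    (by rw [Set.Finite.coe_toFinset]; exact hS)
  rwa [← Set.ncard_eq_toFinset_card S hfin] at h1

end Net

section Graph
variable {X : Type*} [MetricSpace X]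
variable {𝒩 : Set X} {ε : ℝ}

lemma exists_walk_le_count (hgeo : IsGeodesicSpace X) (hnet : IsMaximalNet 𝒩 ε) (hε : 0 < ε)
    (hfin : ∀ (x : X) (R : ℝ), (𝒩 ∩ closedBall x R).Finite) :
    ∀ n : ℕ, ∀ p q : 𝒩, (𝒩 ∩ closedBall (q : X) (dist (p : X) (q : X))).ncard ≤ n →
    ∃ w : (netGraph 𝒩 ε).Walk p q, w.length ≤ n := by
  intro n
  induction n with
  | zero =>
    intro p q hcount
    exfalso
    have hq : (q : X) ∈ 𝒩 ∩ closedBall (q : X) (dist (p : X) (q : X)) :=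
      ⟨q.2, mem_closedBall.2 (by simp [dist_nonneg])⟩
    have := (Set.ncard_pos (hfin _ _)).2 ⟨_, hq⟩
    omega
  | succ n ih =>
    intro p q hcount
    by_cases hpq : p = q
    · subst hpq; exact ⟨SimpleGraph.Walk.nil, by simp⟩
    by_cases hd : dist (p : X) (q : X) < 2 * ε
    · exact ⟨SimpleGraph.Walk.cons (show (netGraph 𝒩 ε).Adj p q from ⟨hpq, hd⟩) SimpleGraph.Walk.nil, by simp⟩
    push_neg at hd
    set d := dist (p : X) (q : X) with hddef
    obtain ⟨f, hf0, hfd, hiso⟩ := hgeo (p : X) (q : X)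
    have hεd : ε ≤ d := by linarith
    have hεmem : ε ∈ Set.Icc (0:ℝ) d := ⟨hε.le, hεd⟩
    have h0mem : (0:ℝ) ∈ Set.Icc (0:ℝ) d := ⟨le_rfl, dist_nonneg⟩
    have hdmem : d ∈ Set.Icc (0:ℝ) d := ⟨dist_nonneg, le_rfl⟩
    set y := f ε with hy
    have hpy : dist (p : X) y = ε := by
      rw [← hf0]
      rw [hiso 0 h0mem ε hεmem]
      rw [abs_of_nonpos (by linarith)]; ring
    have hyq : dist y (q : X) = d - ε := by
      rw [← hfd]
      rw [hiso ε hεmem d hdmem]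
      rw [abs_of_nonpos (by linarith)]; ring
    obtain ⟨p₁, hp₁N, hp₁⟩ := covering hnet hε y
    have hp₁p : p₁ ≠ (p : X) := by
      intro h
      rw [← h] at hpy
      rw [dist_comm] at hp₁
      rw [hpy] at hp₁
      exact lt_irrefl _ hp₁
    have hadj : (netGraph 𝒩 ε).Adj p ⟨p₁, hp₁N⟩ := by
      refine ⟨fun h => hp₁p (congrArg Subtype.val h).symm, ?_⟩
      have : dist (p : X) p₁ ≤ dist (p : X) y + dist y p₁ := dist_triangle _ _ _
      simp only []
      linarith [hpy ▸ this]
    have hd₁ : dist p₁ (q : X) < d := by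
      have : dist p₁ (q : X) ≤ dist p₁ y + dist y (q : X) := dist_triangle _ _ _
      rw [dist_comm p₁ y] at this
      linarith
    have hsub : 𝒩 ∩ closedBall (q : X) (dist p₁ (q : X)) ⊂
        𝒩 ∩ closedBall (q : X) d := by
      constructor
      · exact Set.inter_subset_inter_right _ (closedBall_subset_closedBall hd₁.le)
      · intro hss
        have hpmem : (p : X) ∈ 𝒩 ∩ closedBall (q : X) d := ⟨p.2, mem_closedBall.2 le_rfl⟩
        have := (hss hpmem).2
        rw [mem_closedBall] at this
        rw [← hddef] at this
        exact absurd this (not_le.2 hd₁)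
    have hcount' : (𝒩 ∩ closedBall (q : X) (dist p₁ (q : X))).ncard ≤ n := by
      have := Set.ncard_lt_ncard hsub (hfin _ _)
      omega
    obtain ⟨w', hw'⟩ := ih ⟨p₁, hp₁N⟩ q hcount'
    exact ⟨SimpleGraph.Walk.cons hadj w', by simpa using Nat.succ_le_succ hw'⟩

lemma exists_walk_linear (hgeo : IsGeodesicSpace X) (hnet : IsMaximalNet 𝒩 ε) (hε : 0 < ε)
    (hfin : ∀ (x : X) (R : ℝ), (𝒩 ∩ closedBall x R).Finite)
    {M : ℕ} (hM : ∀ z : X, (𝒩 ∩ closedBall z (3 * ε)).ncard ≤ M) :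
    ∀ n : ℕ, ∀ p q : 𝒩, dist (p : X) (q : X) ≤ n * ε + 2 * ε →
    ∃ w : (netGraph 𝒩 ε).Walk p q, w.length ≤ (n + 1) * M := by
  intro n
  induction n with
  | zero =>
    intro p q hd
    push_cast at hd
    refine (exists_walk_le_count hgeo hnet hε hfin M p q ?_).imp (fun w hw => by simpa using hw)
    refine le_trans (Set.ncard_le_ncard (Set.inter_subset_inter_right _
      (closedBall_subset_closedBall (by linarith))) (hfin _ _)) (hM _)
  | succ n ih =>
    intro p q hd
    by_cases hcase : dist (p : X) (q : X) ≤ n * ε + 2 * ε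
    · obtain ⟨w, hw⟩ := ih p q hcase
      exact ⟨w, hw.trans (Nat.mul_le_mul_right _ (by omega))⟩
    push_neg at hcase
    set d := dist (p : X) (q : X) with hddef
    obtain ⟨f, hf0, hfd, hiso⟩ := hgeo (p : X) (q : X)
    have h2ε : 2 * ε ≤ d := by
      have : (0:ℝ) ≤ n * ε := by positivity
      linarith
    have hmem : d - 2 * ε ∈ Set.Icc (0:ℝ) d := ⟨by linarith, by linarith⟩
    have h0mem : (0:ℝ) ∈ Set.Icc (0:ℝ) d := ⟨le_rfl, dist_nonneg⟩
    have hdmem : d ∈ Set.Icc (0:ℝ) d := ⟨dist_nonneg, le_rfl⟩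
    set y := f (d - 2 * ε) with hy
    have hpy : dist (p : X) y = d - 2 * ε := by
      rw [← hf0, hiso 0 h0mem (d - 2*ε) hmem, abs_of_nonpos (by linarith)]; ring
    have hyq : dist y (q : X) = 2 * ε := by
      rw [← hfd, hiso (d - 2*ε) hmem d hdmem, abs_of_nonpos (by linarith)]; ring
    obtain ⟨q', hq'N, hq'⟩ := covering hnet hε y
    have hpq' : dist (p : X) q' ≤ n * ε + 2 * ε := by
      have h1 : dist (p : X) q' ≤ dist (p : X) y + dist y q' := dist_triangle _ _ _
      have hd' : d ≤ (n+1) * ε + 2 * ε := by exact_mod_cast hd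
      push_cast at hd' ⊢
      nlinarith
    obtain ⟨w₁, hw₁⟩ := ih p ⟨q', hq'N⟩ hpq'
    have hq'q : dist q' (q : X) ≤ 3 * ε := by
      have h1 : dist q' (q : X) ≤ dist q' y + dist y (q : X) := dist_triangle _ _ _
      rw [dist_comm q' y] at h1
      linarith
    obtain ⟨w₂, hw₂⟩ := exists_walk_le_count hgeo hnet hε hfin M ⟨q', hq'N⟩ q
      (le_trans (Set.ncard_le_ncard (Set.inter_subset_inter_right _
        (closedBall_subset_closedBall (by simpa using hq'q))) (hfin _ _)) (hM _))
    refine ⟨w₁.append w₂, ?_⟩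
    rw [SimpleGraph.Walk.length_append]
    calc w₁.length + w₂.length ≤ (n + 1) * M + M := Nat.add_le_add hw₁ hw₂
    _ = (n + 2) * M := by ring
    _ ≤ (n + 1 + 1) * M := Nat.le_of_eq (by ring)

lemma dist_le_walk (p q : 𝒩) (hε : 0 < ε) :
    ∀ w : (netGraph 𝒩 ε).Walk p q, dist (p : X) (q : X) ≤ 2 * ε * w.length := by
  intro w
  induction w with
  | nil => simp
  | @cons u v r ha w ih =>
    have h1 : dist (u : X) (r : X) ≤ dist (u : X) (v : X) + dist (v : X) (r : X) :=
      dist_triangle _ _ _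
    rw [SimpleGraph.Walk.length_cons]
    push_cast
    have := ha.2
    nlinarith [ih]

end Graph

section Limsup
open Filter

lemma logdiv_bounded (g : ℝ → ℝ) (c d c₀ : ℝ) (hc₀ : 0 < c₀)
    (h1 : ∀ᶠ r in atTop, c₀ ≤ g r)
    (h2 : ∀ᶠ r in atTop, g r ≤ Real.exp (c * r + d)) :
    IsBoundedUnder (· ≤ ·) atTop (fun r => Real.log (g r) / r) := by
  refine isBoundedUnder_of_eventually_le (a := c + |d| + |Real.log c₀|) ?_
  filter_upwards [h1, h2, eventually_ge_atTop (1:ℝ)] with r hg1 hg2 hr1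
  have hr0 : (0:ℝ) < r := by linarith
  have hlog : Real.log (g r) ≤ c * r + d :=
    (Real.log_le_iff_le_exp (by linarith)).2 hg2
  rw [div_le_iff₀ hr0]
  have habs : d ≤ |d| := le_abs_self d
  nlinarith [abs_nonneg d, abs_nonneg (Real.log c₀)]

lemma limsup_pos_of_comp (f g : ℝ → ℝ) (c₀ A a b : ℝ) (hc₀ : 0 < c₀) (hA : 0 < A) (ha : 0 < a)
    (hf1 : ∀ᶠ r in atTop, c₀ ≤ f r)
    (hfg : ∀ᶠ r in atTop, f r ≤ A * g (a * r + b))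
    (hgb : IsBoundedUnder (· ≤ ·) atTop (fun r => Real.log (g r) / r))
    (hpos : 0 < limsup (fun r => Real.log (f r) / r) atTop) :
    0 < limsup (fun r => Real.log (g r) / r) atTop := by
  -- coboundedness of the f-side
  have hcob : IsCoboundedUnder (· ≤ ·) atTop (fun r => Real.log (f r) / r) := by
    refine IsBoundedUnder.isCoboundedUnder_le (isBoundedUnder_of_eventually_ge
      (a := min (Real.log c₀) 0) ?_)
    filter_upwards [hf1, eventually_ge_atTop (1:ℝ)] with r hfr hr1
    have hr0 : (0:ℝ) < r := by linarith
    have hL : Real.log c₀ ≤ Real.log (f r) := Real.log_le_log hc₀ hfr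
    rcases le_or_gt 0 (Real.log (f r)) with h | h
    · exact le_trans (min_le_right _ _) (div_nonneg h hr0.le)
    · refine le_trans (min_le_left _ _) (le_trans hL ?_)
      rw [le_div_iff₀ hr0]
      nlinarith
  set L := limsup (fun r => Real.log (f r) / r) atTop with hL
  set c := L / 2 with hc
  have hcpos : 0 < c := by positivity
  have hcL : c < L := by rw [hc]; linarith
  have hfreq : ∃ᶠ r in atTop, c < Real.log (f r) / r :=
    frequently_lt_of_lt_limsup hcob hcL
  -- push to the g side
  have hkey : ∃ᶠ ρ in atTop, c * (ρ - b) / a - Real.log A ≤ Real.log (g ρ) := by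
    have htend : Tendsto (fun r : ℝ => a * r + b) atTop atTop :=
      tendsto_atTop_add_const_right _ b (Tendsto.const_mul_atTop ha tendsto_id)
    refine htend.frequently ?_
    have hcomb := (hfreq.and_eventually (hf1.and (hfg.and (eventually_ge_atTop (1:ℝ)))))
    refine hcomb.mono ?_
    rintro r ⟨hcr, hfr, hfgr, hr1⟩
    have hr0 : (0:ℝ) < r := by linarith
    have hgpos : 0 < g (a * r + b) := by
      by_contra hg
      push_neg at hg
      nlinarith
    have h1 : c * r ≤ Real.log (f r) := by
      have := (lt_div_iff₀ hr0).1 hcr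
      linarith
    have h2 : Real.log (f r) ≤ Real.log A + Real.log (g (a * r + b)) := by
      rw [← Real.log_mul hA.ne' hgpos.ne']
      exact Real.log_le_log (by linarith) hfgr
    have h3 : c * ((a * r + b) - b) / a = c * r := by field_simp; ring
    rw [h3]
    linarith
  have hfin : ∃ᶠ ρ in atTop, c / (2 * a) ≤ Real.log (g ρ) / ρ := by
    refine (hkey.and_eventually (eventually_ge_atTop
      (max 1 (2 * b + (2 * a / c) * Real.log A)))).mono ?_
    rintro ρ ⟨hρ1, hρ2⟩
    have hρge1 : (1:ℝ) ≤ ρ := le_trans (le_max_left _ _) hρ2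
    have hρgeR : 2 * b + (2 * a / c) * Real.log A ≤ ρ := le_trans (le_max_right _ _) hρ2
    have hρ0 : (0:ℝ) < ρ := by linarith
    rw [le_div_iff₀ hρ0]
    have h2a : (0:ℝ) < 2 * a := by linarith
    have h4 : (2 * a / c) * Real.log A * c = 2 * a * Real.log A := by field_simp
    have h5 : (c / (2 * a) * ρ) * (2 * a) = c * ρ := by field_simp
    have h6 : (c * (ρ - b) / a - Real.log A) * (2 * a) =
        2 * c * (ρ - b) - 2 * a * Real.log A := by field_simp
    have h7 : c * ρ ≤ 2 * c * (ρ - b) - 2 * a * Real.log A := by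
      nlinarith [mul_le_mul_of_nonneg_left hρgeR hcpos.le]
    have h8 : (c / (2 * a) * ρ) * (2 * a) ≤ (c * (ρ - b) / a - Real.log A) * (2 * a) := by
      rw [h5, h6]; exact h7
    have := le_of_mul_le_mul_right h8 h2a
    linarith [hρ1]
  have := le_limsup_of_frequently_le hfin hgb
  have hc2a : 0 < c / (2 * a) := by positivity
  linarith

end Limsup

section CoverBound
variable {X : Type*} [MetricSpace X] [MeasurableSpace X] [BorelSpace X]
variable {ν : Measure X} {𝒩 : Set X} {ε : ℝ}

lemma volume_le_count (hnet : IsMaximalNet 𝒩 ε) (hε : 0 < ε)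
    (hbdd : ∀ s : Set X, Bornology.IsBounded s → ν s < ⊤)
    (hfin : ∀ (x : X) (R : ℝ), (𝒩 ∩ closedBall x R).Finite)
    (x₀ : X) (r : ℝ) {VUε : ℝ} (hVUε : ∀ p : X, (ν (ball p ε)).toReal ≤ VUε) :
    (ν (ball x₀ r)).toReal ≤ ((𝒩 ∩ closedBall x₀ (r + ε)).ncard : ℝ) * VUε := by
  set T := (hfin x₀ (r + ε)).toFinset with hT
  have hcov : ball x₀ r ⊆ ⋃ p ∈ T, ball p ε := by
    intro z hz
    obtain ⟨p, hpN, hpz⟩ := covering hnet hε z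
    have hzx : dist z x₀ < r := mem_ball.1 hz
    have hpx : dist p x₀ ≤ r + ε := by
      have := dist_triangle p z x₀
      rw [dist_comm p z] at this
      linarith
    have hpT : p ∈ T := by
      rw [hT, Set.Finite.mem_toFinset]
      exact ⟨hpN, mem_closedBall.2 hpx⟩
    exact Set.mem_biUnion hpT (mem_ball.2 hpz)
  have h1 : ν (ball x₀ r) ≤ ∑ p ∈ T, ν (ball p ε) :=
    le_trans (measure_mono hcov) (measure_biUnion_finset_le T _)
  have hsumne : (∑ p ∈ T, ν (ball p ε)) ≠ ⊤ := by
    refine (ENNReal.sum_lt_top.2 (fun p _ => ?_)).ne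
    exact hbdd _ isBounded_ball
  have h2 : (ν (ball x₀ r)).toReal ≤ (∑ p ∈ T, ν (ball p ε)).toReal :=
    (ENNReal.toReal_le_toReal ((lt_of_le_of_lt h1 hsumne.lt_top).ne) hsumne).2 h1
  have h3 : (∑ p ∈ T, ν (ball p ε)).toReal = ∑ p ∈ T, (ν (ball p ε)).toReal :=
    ENNReal.toReal_sum (fun p _ => nu_ne_top hbdd p ε)
  have h4 : ∑ p ∈ T, (ν (ball p ε)).toReal ≤ (T.card : ℝ) * VUε := by
    calc ∑ p ∈ T, (ν (ball p ε)).toReal ≤ ∑ _p ∈ T, VUε :=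
          Finset.sum_le_sum (fun p _ => hVUε p)
    _ = (T.card : ℝ) * VUε := by rw [Finset.sum_const, nsmul_eq_mul]
  have h5 : (𝒩 ∩ closedBall x₀ (r + ε)).ncard = T.card :=
    Set.ncard_eq_toFinset_card _ (hfin x₀ (r + ε))
  rw [h5]
  linarith

end CoverBound

end StmtAux

set_option maxHeartbeats 2000000 in
open StmtAux Filter in
theorem stmt_14 {X : Type*} [MetricSpace X] [ProperSpace X]
    [MeasurableSpace X] [BorelSpace X]
    (hgeo : IsGeodesicSpace X)
    (ν : Measure X)
    (hfull : ∀ x : X, ∀ r > (0:ℝ), 0 < ν (ball x r))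
    (hbdd : ∀ s : Set X, Bornology.IsBounded s → ν s < ⊤)
    (K N : ℝ) (hK : K ≤ 0) (hN : 1 < N)
    (hBG : BishopGromov ν K N)
    (r₀ V₀ V₁ : ℝ) (hr₀ : 0 < r₀) (hV₀ : 0 < V₀) (hV₁ : 0 < V₁)
    (hnc : ∀ x : X, V₀ ≤ (ν (ball x r₀)).toReal ∧ (ν (ball x r₀)).toReal ≤ V₁)
    (ε : ℝ) (hε : 0 < ε) (𝒩 : Set X) (hnet : IsMaximalNet 𝒩 ε)
    (x₀ : X) (p₀ : 𝒩) :
    VolumeExpGrowth ν x₀ ↔ GraphExpGrowth (netGraph 𝒩 ε) p₀ := by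
  classical
  -- basic constants
  set s₀ : ℝ := min (ε / 2) r₀ with hs₀def
  have hs₀pos : 0 < s₀ := lt_min (by linarith) hr₀
  have hs₀ε : s₀ ≤ ε / 2 := min_le_left _ _
  have hs₀r₀ : s₀ ≤ r₀ := min_le_right _ _
  have hIr₀ : 0 < Ikn K N r₀ := ikn_pos hK hN hr₀
  have hIs₀ : 0 < Ikn K N s₀ := ikn_pos hK hN hs₀pos
  set VL : ℝ := V₀ * (Ikn K N s₀ / Ikn K N r₀) with hVLdef
  have hVLpos : 0 < VL := by positivity
  have hVL : ∀ x : X, VL ≤ (ν (ball x s₀)).toReal := by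
    intro x
    have h1 := bg_mul hK hN hBG x hs₀pos hs₀r₀
    have h2 := (hnc x).1
    rw [hVLdef, ← mul_div_assoc, div_le_iff₀ hIr₀]
    nlinarith [hIs₀.le]
  set VU : ℝ → ℝ := fun R => V₁ * (Ikn K N (max R r₀) / Ikn K N r₀) with hVUdef
  have hVUpos : ∀ R, 0 < VU R := by
    intro R
    have : 0 < Ikn K N (max R r₀) := ikn_pos hK hN (lt_of_lt_of_le hr₀ (le_max_right _ _))
    rw [hVUdef]; positivity
  have hVU : ∀ (x : X) (R : ℝ), (ν (ball x R)).toReal ≤ VU R := by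
    intro x R
    rcases le_total R r₀ with h | h
    · have hmax : max R r₀ = r₀ := max_eq_right h
      rw [hVUdef]
      simp only [hmax, div_self hIr₀.ne', mul_one]
      exact le_trans (mu_mono hbdd x h) (hnc x).2
    · have hmax : max R r₀ = R := max_eq_left h
      have h1 := bg_mul hK hN hBG x hr₀ h
      have h2 := (hnc x).2
      have hIR : 0 < Ikn K N R := ikn_pos hK hN (lt_of_lt_of_le hr₀ h)
      rw [hVUdef]
      simp only [hmax]
      rw [← mul_div_assoc, le_div_iff₀ hIr₀]
      nlinarith [hIR.le]
  have hfin : ∀ (x : X) (R : ℝ), (𝒩 ∩ closedBall x R).Finite :=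
    fun x R => net_finite hnet hε hbdd hs₀pos hs₀ε hVLpos hVL x R
  have hncard : ∀ (x : X) (R : ℝ) (S : Set X), S ⊆ 𝒩 ∩ closedBall x R →
      (S.ncard : ℝ) * VL ≤ (ν (ball x (R + s₀))).toReal :=
    fun x R S hS => net_ncard hnet hε hbdd hs₀pos hs₀ε hVLpos hVL x R hS
  -- the uniform bound on short-range counts
  set M : ℕ := ⌈VU (3 * ε + s₀) / VL⌉₊ with hMdef
  have hM : ∀ z : X, (𝒩 ∩ closedBall z (3 * ε)).ncard ≤ M := by
    intro z
    have h1 := hncard z (3 * ε) _ (le_refl (𝒩 ∩ closedBall z (3 * ε)))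
    have h2 : ((𝒩 ∩ closedBall z (3 * ε)).ncard : ℝ) ≤ VU (3 * ε + s₀) / VL := by
      rw [le_div_iff₀ hVLpos]
      exact le_trans h1 (hVU z _)
    have h3 := le_trans h2 (Nat.le_ceil _)
    exact_mod_cast h3
  -- graph metric infrastructure
  set GG : SimpleGraph 𝒩 := netGraph 𝒩 ε with hGGdef
  have hwalk : ∀ (n : ℕ) (p q : 𝒩), dist (p : X) (q : X) ≤ n * ε + 2 * ε →
      ∃ w : GG.Walk p q, w.length ≤ (n + 1) * M :=
    exists_walk_linear hgeo hnet hε hfin hM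
  have hreach : ∀ p q : 𝒩, GG.Reachable p q := by
    intro p q
    set n : ℕ := ⌈dist (p : X) (q : X) / ε⌉₊ with hn
    have h1 : dist (p : X) (q : X) ≤ n * ε + 2 * ε := by
      have h2 : dist (p : X) (q : X) / ε ≤ (n : ℝ) := Nat.le_ceil _
      rw [div_le_iff₀ hε] at h2
      linarith
    obtain ⟨w, _⟩ := hwalk n p q h1
    exact ⟨w⟩
  have hmetric : ∀ v : 𝒩, dist (p₀ : X) (v : X) ≤ 2 * ε * (GG.dist p₀ v : ℝ) := by
    intro v
    obtain ⟨w, hw⟩ := (hreach p₀ v).exists_walk_length_eq_dist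
    have := dist_le_walk p₀ v hε w
    rw [hw] at this
    exact this
  set D : ℝ := dist x₀ (p₀ : X) with hDdef
  have hD0 : 0 ≤ D := dist_nonneg
  -- graph balls
  set GBs : ℝ → Set 𝒩 := fun r => {v : 𝒩 | (GG.dist p₀ v : ℝ) ≤ r} with hGBdef
  have himg : ∀ r : ℝ, Subtype.val '' GBs r ⊆ 𝒩 ∩ closedBall x₀ (D + 2 * ε * r) := by
    intro r z hz
    obtain ⟨v, hv, rfl⟩ := hz
    refine ⟨v.2, mem_closedBall.2 ?_⟩
    have h1 : dist (v : X) x₀ ≤ dist (v : X) (p₀ : X) + dist (p₀ : X) x₀ := dist_triangle _ _ _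
    have h2 : dist (v : X) (p₀ : X) = dist (p₀ : X) (v : X) := dist_comm _ _
    have h3 : dist (p₀ : X) x₀ = D := dist_comm _ _
    have h4 := hmetric v
    have h5 : (GG.dist p₀ v : ℝ) ≤ r := hv
    nlinarith [hε.le]
  have hGBfin : ∀ r : ℝ, (GBs r).Finite := by
    intro r
    have h1 : GBs r ⊆ Subtype.val ⁻¹' (𝒩 ∩ closedBall x₀ (D + 2 * ε * r)) := by
      intro v hv
      exact himg r ⟨v, hv, rfl⟩
    exact ((hfin _ _).preimage (Set.injOn_of_injective Subtype.val_injective)).subset h1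
  set Gf : ℝ → ℝ := fun r => ((GBs r).ncard : ℝ) with hGfdef
  set Ff : ℝ → ℝ := fun r => (ν (ball x₀ r)).toReal with hFfdef
  have hGimg : ∀ r : ℝ, (Subtype.val '' GBs r).ncard = (GBs r).ncard :=
    fun r => Set.ncard_image_of_injective _ Subtype.val_injective
  -- comparison constants
  set a₁ : ℝ := ((M : ℝ) + 1) / ε with ha₁def
  set b₁ : ℝ := ((M : ℝ) + 1) / ε * (D + ε) + 2 * ((M : ℝ) + 1) with hb₁def
  have ha₁pos : 0 < a₁ := by positivity
  -- direction 1 comparison : F r ≤ VU ε * G (a₁ r + b₁)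
  have hFG : ∀ r : ℝ, 0 ≤ r → Ff r ≤ VU ε * Gf (a₁ * r + b₁) := by
    intro r hr
    have hcount := volume_le_count hnet hε hbdd hfin x₀ r (fun p => hVU p ε)
    have hsub : 𝒩 ∩ closedBall x₀ (r + ε) ⊆ Subtype.val '' GBs (a₁ * r + b₁) := by
      rintro z ⟨hzN, hzB⟩
      set v : 𝒩 := ⟨z, hzN⟩ with hvdef
      refine ⟨v, ?_, rfl⟩
      set n : ℕ := ⌈(D + r + ε) / ε⌉₊ with hndef
      have hceil : (D + r + ε) / ε ≤ (n : ℝ) := Nat.le_ceil _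
      have hDre : 0 ≤ (D + r + ε) / ε := by positivity
      have hd1 : dist (p₀ : X) (v : X) ≤ D + r + ε := by
        have h1 : dist (p₀ : X) z ≤ dist (p₀ : X) x₀ + dist x₀ z := dist_triangle _ _ _
        have h2 : dist x₀ z = dist z x₀ := dist_comm _ _
        have h3 : dist z x₀ ≤ r + ε := mem_closedBall.1 hzB
        have h4 : dist (p₀ : X) x₀ = D := dist_comm _ _
        simp only [hvdef]
        linarith
      have hd2 : dist (p₀ : X) (v : X) ≤ n * ε + 2 * ε := by
        rw [div_le_iff₀ hε] at hceil
        linarith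
      obtain ⟨w, hw⟩ := hwalk n p₀ v hd2
      have hgd : GG.dist p₀ v ≤ (n + 1) * M := le_trans (SimpleGraph.dist_le w) hw
      show (GG.dist p₀ v : ℝ) ≤ a₁ * r + b₁
      have hcast : (GG.dist p₀ v : ℝ) ≤ ((n : ℝ) + 1) * (M : ℝ) := by
        have := (Nat.cast_le (α := ℝ)).2 hgd
        push_cast at this
        linarith
      have hnlt : (n : ℝ) ≤ (D + r + ε) / ε + 1 := le_of_lt (Nat.ceil_lt_add_one hDre)
      have hMnn : (0 : ℝ) ≤ (M : ℝ) := Nat.cast_nonneg _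
      have heq : a₁ * r + b₁ = ((M : ℝ) + 1) * ((D + r + ε) / ε) + 2 * ((M : ℝ) + 1) := by
        rw [ha₁def, hb₁def]
        field_simp
        ring
      rw [heq]
      nlinarith [hDre, hMnn, hnlt, hcast]
    have hle : ((𝒩 ∩ closedBall x₀ (r + ε)).ncard : ℝ) ≤ Gf (a₁ * r + b₁) := by
      have h1 : (𝒩 ∩ closedBall x₀ (r + ε)).ncard ≤ (Subtype.val '' GBs (a₁ * r + b₁)).ncard :=
        Set.ncard_le_ncard hsub ((hGBfin _).image _)
      rw [hGimg] at h1
      show ((𝒩 ∩ closedBall x₀ (r + ε)).ncard : ℝ) ≤ ((GBs (a₁ * r + b₁)).ncard : ℝ)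
      exact_mod_cast h1
    calc Ff r ≤ ((𝒩 ∩ closedBall x₀ (r + ε)).ncard : ℝ) * VU ε := hcount
    _ ≤ Gf (a₁ * r + b₁) * VU ε := by
        exact mul_le_mul_of_nonneg_right hle (hVUpos ε).le
    _ = VU ε * Gf (a₁ * r + b₁) := mul_comm _ _
  -- direction 2 comparison : G r ≤ (1/VL) * F (2ε r + (D + s₀))
  have hGF : ∀ r : ℝ, Gf r ≤ (1 / VL) * Ff (2 * ε * r + (D + s₀)) := by
    intro r
    have h1 := hncard x₀ (D + 2 * ε * r) (Subtype.val '' GBs r) (himg r)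
    rw [hGimg r] at h1
    have harg : D + 2 * ε * r + s₀ = 2 * ε * r + (D + s₀) := by ring
    rw [harg] at h1
    rw [one_div, ← div_eq_inv_mul, le_div_iff₀ hVLpos]
    exact h1
  -- eventual lower bounds
  have hF1 : ∀ᶠ r in atTop, V₀ ≤ Ff r := by
    filter_upwards [eventually_ge_atTop r₀] with r hr
    exact le_trans (hnc x₀).1 (mu_mono hbdd x₀ hr)
  have hG1 : ∀ᶠ r in atTop, 1 ≤ Gf r := by
    filter_upwards [eventually_ge_atTop (0:ℝ)] with r hr
    have hp₀ : p₀ ∈ GBs r := by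
      show (GG.dist p₀ p₀ : ℝ) ≤ r
      rw [SimpleGraph.dist_self]
      simpa using hr
    have := (Set.ncard_pos (hGBfin r)).2 ⟨p₀, hp₀⟩
    have h2 : (1 : ℕ) ≤ (GBs r).ncard := this
    show (1:ℝ) ≤ ((GBs r).ncard : ℝ)
    exact_mod_cast h2
  -- eventual exponential upper bounds
  set cF : ℝ := cexp K N + 2 with hcFdef
  have hFexp : ∀ᶠ r in atTop, Ff r ≤ Real.exp (cF * r + 0) := by
    filter_upwards [eventually_ge_atTop (max (max r₀ 1) (V₁ / Ikn K N r₀))] with r hr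
    have hrr₀ : r₀ ≤ r := le_trans (le_trans (le_max_left _ _) (le_max_left _ _)) hr
    have hr1 : (1:ℝ) ≤ r := le_trans (le_trans (le_max_right _ _) (le_max_left _ _)) hr
    have hrC : V₁ / Ikn K N r₀ ≤ r := le_trans (le_max_right _ _) hr
    have hr0 : (0:ℝ) ≤ r := by linarith
    have h1 : Ff r ≤ VU r := hVU x₀ r
    have hmax : max r r₀ = r := max_eq_left hrr₀
    have h2 : VU r = (V₁ / Ikn K N r₀) * Ikn K N r := by
      rw [hVUdef]; simp only [hmax]; field_simp
    have h3 : Ikn K N r ≤ r * Real.exp (cexp K N * r) := ikn_le_exp hN hr0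
    have hIrpos : (0:ℝ) < Ikn K N r := ikn_pos hK hN (by linarith)
    have hCpos : (0:ℝ) < V₁ / Ikn K N r₀ := by positivity
    have hrexp : r ≤ Real.exp r := by linarith [Real.add_one_le_exp r]
    have h4 : VU r ≤ r * (r * Real.exp (cexp K N * r)) := by
      rw [h2]
      have := mul_le_mul_of_nonneg_left h3 hCpos.le
      have h5 : (V₁ / Ikn K N r₀) * (r * Real.exp (cexp K N * r)) ≤
          r * (r * Real.exp (cexp K N * r)) := by
        refine mul_le_mul_of_nonneg_right hrC ?_
        positivity
      linarith
    have h6 : r * (r * Real.exp (cexp K N * r)) ≤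
        Real.exp r * (Real.exp r * Real.exp (cexp K N * r)) := by
      have he1 : (0:ℝ) < Real.exp r := Real.exp_pos r
      have he2 : (0:ℝ) < Real.exp (cexp K N * r) := Real.exp_pos _
      have h6a : r * r ≤ Real.exp r * Real.exp r :=
        mul_le_mul hrexp hrexp hr0 he1.le
      have h6b := mul_le_mul_of_nonneg_right h6a he2.le
      calc r * (r * Real.exp (cexp K N * r)) = (r * r) * Real.exp (cexp K N * r) := by ring
      _ ≤ (Real.exp r * Real.exp r) * Real.exp (cexp K N * r) := h6b
      _ = Real.exp r * (Real.exp r * Real.exp (cexp K N * r)) := by ring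
    have h7 : Real.exp r * (Real.exp r * Real.exp (cexp K N * r)) =
        Real.exp (cF * r + 0) := by
      rw [← Real.exp_add, ← Real.exp_add, hcFdef]
      ring_nf
    linarith
  have htend2 : Tendsto (fun r : ℝ => 2 * ε * r + (D + s₀)) atTop atTop :=
    tendsto_atTop_add_const_right _ _ (Tendsto.const_mul_atTop (by linarith) tendsto_id)
  have hGexp : ∀ᶠ r in atTop, Gf r ≤
      Real.exp ((cF * (2 * ε)) * r + (cF * (D + s₀) + Real.log (1 / VL))) := by
    filter_upwards [htend2.eventually hFexp] with r hFr
    have h1 : Gf r ≤ (1 / VL) * Ff (2 * ε * r + (D + s₀)) := hGF r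
    have h2 : (1 / VL) * Ff (2 * ε * r + (D + s₀)) ≤
        (1 / VL) * Real.exp (cF * (2 * ε * r + (D + s₀)) + 0) := by
      refine mul_le_mul_of_nonneg_left hFr (by positivity)
    have hpos1 : (0:ℝ) < 1 / VL := by positivity
    have h3 : (1 / VL) * Real.exp (cF * (2 * ε * r + (D + s₀)) + 0) =
        Real.exp (Real.log (1 / VL) + (cF * (2 * ε * r + (D + s₀)) + 0)) := by
      rw [Real.exp_add (Real.log (1 / VL)) (cF * (2 * ε * r + (D + s₀)) + 0), Real.exp_log hpos1]
    have h4 : Real.log (1 / VL) + (cF * (2 * ε * r + (D + s₀)) + 0) =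
        (cF * (2 * ε)) * r + (cF * (D + s₀) + Real.log (1 / VL)) := by ring
    rw [h4] at h3
    linarith
  -- bounded log-ratios
  have hgbG : IsBoundedUnder (· ≤ ·) atTop (fun r => Real.log (Gf r) / r) :=
    logdiv_bounded Gf _ _ 1 one_pos hG1 hGexp
  have hgbF : IsBoundedUnder (· ≤ ·) atTop (fun r => Real.log (Ff r) / r) :=
    logdiv_bounded Ff _ _ V₀ hV₀ hF1 hFexp
  -- conclusion
  have hFGev : ∀ᶠ r in atTop, Ff r ≤ VU ε * Gf (a₁ * r + b₁) := by
    filter_upwards [eventually_ge_atTop (0:ℝ)] with r hr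
    exact hFG r hr
  have hGFev : ∀ᶠ r in atTop, Gf r ≤ (1 / VL) * Ff (2 * ε * r + (D + s₀)) :=
    Eventually.of_forall hGF
  constructor
  · intro hvol
    have := limsup_pos_of_comp Ff Gf V₀ (VU ε) a₁ b₁ hV₀ (hVUpos ε) ha₁pos
      hF1 hFGev hgbG hvol
    exact this
  · intro hgr
    have := limsup_pos_of_comp Gf Ff 1 (1 / VL) (2 * ε) (D + s₀) one_pos
      (by positivity) (by linarith) hG1 hGFev hgbF hgr
    exact this
end

section
/- Let (X₁,d₁,ν₁) and (X₂,d₂,ν₂) be proper geodesic metric spaces equipped with Borel measures of full support which are finite on bounded sets, each satisfying the Bishop–Gromov inequality with parameters (K,N), where K ≤ 0 and 1 < N < ∞, and each satisfying the non-collapsing condition: there exist r₀, V₀, V₁ > 0 with V₀ ≤ νᵢ(B(x,r₀)) ≤ V₁ for all x ∈ Xᵢ (i = 1,2). Fix basepoints x₁ ∈ X₁ and x₂ ∈ X₂. If X₁ and X₂ are roughly isometric, then X₁ has polynomial volume growth if and only if X₂ does, and X₁ has exponential volume growth if and only if X₂ does. -/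
open MeasureTheory Metric

/-- `f` is a rough isometry from `(α, dX)` to `(β, dY)`: there are `a ≥ 1`, `b ≥ 0` with
`(1/a)·dX x₁ x₂ − b ≤ dY (f x₁) (f x₂) ≤ a·dX x₁ x₂ + b`, and `f` is `ε₁`-full for
some `ε₁ > 0`. -/
def IsRoughIsometry {α β : Type*} (dX : α → α → ℝ) (dY : β → β → ℝ) (f : α → β) : Prop :=
  (∃ a : ℝ, 1 ≤ a ∧ ∃ b : ℝ, 0 ≤ b ∧ ∀ x₁ x₂ : α,
    (1 / a) * dX x₁ x₂ - b ≤ dY (f x₁) (f x₂) ∧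
    dY (f x₁) (f x₂) ≤ a * dX x₁ x₂ + b) ∧
  ∃ ε₁ > (0:ℝ), ∀ y : β, ∃ x : α, dY y (f x) ≤ ε₁

open scoped ENNReal NNReal

noncomputable def Ivol (K N r : ℝ) : ℝ := ∫ t in (0:ℝ)..r, SKN K N t

lemma skn_continuous (K N : ℝ) (hN : 1 < N) : Continuous (fun t => SKN K N t) := by
  have h1 : Continuous (fun t : ℝ => t ^ (N - 1)) := by
    rw [continuous_iff_continuousAt]
    intro t
    exact Real.continuousAt_rpow_const t (N - 1) (Or.inr (by linarith))
  by_cases hK : K = 0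
  · simpa [SKN, hK] using h1
  · have h2 : Continuous (fun t : ℝ => Real.sinh (Real.sqrt (|K| / (N - 1)) * t)) :=
      Real.continuous_sinh.comp (continuous_const.mul continuous_id)
    have h3 := h1.comp h2
    simp only [SKN, hK, if_false]
    exact h3

lemma skn_pos (K N : ℝ) (hN : 1 < N) {t : ℝ} (ht : 0 < t) : 0 < SKN K N t := by
  unfold SKN
  split_ifs with h
  · exact Real.rpow_pos_of_pos ht _
  · refine Real.rpow_pos_of_pos ?_ _
    apply Real.sinh_pos_iff.mpr
    have h1 : 0 < |K| := abs_pos.mpr h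
    have h2 : 0 < |K| / (N - 1) := div_pos h1 (by linarith)
    exact mul_pos (Real.sqrt_pos.mpr h2) ht

lemma skn_nonneg (K N : ℝ) (hN : 1 < N) {t : ℝ} (ht : 0 ≤ t) : 0 ≤ SKN K N t := by
  unfold SKN
  split_ifs with h
  · exact Real.rpow_nonneg ht _
  · exact Real.rpow_nonneg (Real.sinh_nonneg_iff.mpr (by positivity)) _

lemma Ivol_pos (K N : ℝ) (hN : 1 < N) {r : ℝ} (hr : 0 < r) : 0 < Ivol K N r := by
  apply intervalIntegral.intervalIntegral_pos_of_pos_on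
  · exact (skn_continuous K N hN).intervalIntegrable _ _
  · intro t ht; exact skn_pos K N hN ht.1
  · exact hr

lemma bg_upper {X : Type*} [MetricSpace X] [MeasurableSpace X] (ν : Measure X)
    (K N : ℝ) (hN : 1 < N) (hBG : BishopGromov ν K N)
    {r₀ s : ℝ} (hr₀ : 0 < r₀) (hrs : r₀ ≤ s) (p : X) :
    (ν (ball p s)).toReal ≤ (ν (ball p r₀)).toReal * (Ivol K N s / Ivol K N r₀) := by
  have hs0 : 0 < s := lt_of_lt_of_le hr₀ hrs
  have h := hBG p (Set.mem_Ioi.mpr hr₀) (Set.mem_Ioi.mpr hs0) hrs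
  have hIs : 0 < Ivol K N s := Ivol_pos K N hN hs0
  have hIr : 0 < Ivol K N r₀ := Ivol_pos K N hN hr₀
  simp only [Ivol] at hIs hIr ⊢
  rw [div_le_div_iff₀ hIs hIr] at h
  rw [mul_div_assoc'] at *
  rw [le_div_iff₀ hIr]
  linarith

lemma maximal_net {X : Type*} [MetricSpace X] (T : Set X) (s : ℝ) (hs : 0 < s) :
    ∃ S : Set X, S ⊆ T ∧ (S.Pairwise fun p q => s ≤ dist p q) ∧ T ⊆ ⋃ p ∈ S, ball p s := by
  have hz : ∃ S, Maximal (· ∈ {S : Set X | S ⊆ T ∧ S.Pairwise fun p q => s ≤ dist p q}) S := by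
    apply zorn_subset
    intro c hc hchain
    refine ⟨⋃₀ c, ⟨Set.sUnion_subset fun A hA => (hc hA).1, ?_⟩,
      fun A hA => Set.subset_sUnion_of_mem hA⟩
    intro p hp q hq hpq
    obtain ⟨A, hA, hpA⟩ := hp
    obtain ⟨B, hB, hqB⟩ := hq
    rcases hchain.total hA hB with h | h
    · exact (hc hB).2 (h hpA) hqB hpq
    · exact (hc hA).2 hpA (h hqB) hpq
  obtain ⟨S, hSmem, hSmax⟩ := hz
  · refine ⟨S, hSmem.1, hSmem.2, ?_⟩
    intro z hz
    by_contra hzn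
    simp only [Set.mem_iUnion, mem_ball, not_exists, not_lt] at hzn
    have hzS : z ∉ S := by
      intro h
      have := hzn z h
      rw [dist_self] at this
      linarith
    have hmem : insert z S ∈ {S : Set X | S ⊆ T ∧ S.Pairwise fun p q => s ≤ dist p q} := by
      refine ⟨Set.insert_subset hz hSmem.1, ?_⟩
      haveI : Std.Symm (fun p q : X => s ≤ dist p q) := ⟨fun p q h => by rwa [dist_comm]⟩
      rw [Set.pairwise_insert_of_symm]
      exact ⟨hSmem.2, fun q hq _ => hzn q hq⟩
    have := hSmax hmem (Set.subset_insert _ _)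
    exact hzS (this (Set.mem_insert z S))

lemma sep_count {Y : Type*} [MetricSpace Y] [MeasurableSpace Y] [BorelSpace Y] (μ : Measure Y)
    (hbdd : ∀ s : Set Y, Bornology.IsBounded s → μ s < ⊤)
    {r₀ V₀ : ℝ} (hr₀ : 0 < r₀) (hV₀ : 0 < V₀)
    (hnc : ∀ q : Y, V₀ ≤ (μ (ball q r₀)).toReal)
    (S : Set Y) (hsep : S.Pairwise fun p q => 2 * r₀ ≤ dist p q)
    (y : Y) (R : ℝ) (hSR : S ⊆ ball y R) :
    S.Finite ∧ (S.ncard : ℝ) * V₀ ≤ (μ (ball y (R + r₀))).toReal := by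
  have hdisj : S.PairwiseDisjoint (fun p => ball p r₀) := by
    intro p hp q hq hpq
    exact ball_disjoint_ball (by linarith [hsep hp hq hpq])
  have hsub : ∀ p ∈ S, ball p r₀ ⊆ ball y (R + r₀) := by
    intro p hp z hz
    have h1 := hSR hp
    rw [mem_ball] at *
    calc dist z y ≤ dist z p + dist p y := dist_triangle _ _ _
    _ < R + r₀ := by linarith
  have hlow : ∀ q : Y, ENNReal.ofReal V₀ ≤ μ (ball q r₀) :=
    fun q => ENNReal.ofReal_le_of_le_toReal (hnc q)
  have hbig : μ (ball y (R + r₀)) < ⊤ := hbdd _ isBounded_ball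
  have key : ∀ F : Finset Y, ↑F ⊆ S →
      (F.card : ℝ≥0∞) * ENNReal.ofReal V₀ ≤ μ (ball y (R + r₀)) := by
    intro F hF
    have hdisjF : (↑F : Set Y).PairwiseDisjoint (fun p => ball p r₀) := hdisj.subset hF
    calc (F.card : ℝ≥0∞) * ENNReal.ofReal V₀ = ∑ _p ∈ F, ENNReal.ofReal V₀ := by
          rw [Finset.sum_const, nsmul_eq_mul]
    _ ≤ ∑ p ∈ F, μ (ball p r₀) := Finset.sum_le_sum fun p _ => hlow p
    _ = μ (⋃ p ∈ F, ball p r₀) :=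
          (measure_biUnion_finset hdisjF fun p _ => measurableSet_ball).symm
    _ ≤ μ (ball y (R + r₀)) :=
          measure_mono (Set.iUnion₂_subset fun p hp => hsub p (hF hp))
  have keyR : ∀ F : Finset Y, ↑F ⊆ S →
      (F.card : ℝ) * V₀ ≤ (μ (ball y (R + r₀))).toReal := by
    intro F hF
    have h := ENNReal.toReal_mono hbig.ne (key F hF)
    rwa [ENNReal.toReal_mul, ← ENNReal.ofReal_natCast, ENNReal.toReal_ofReal (Nat.cast_nonneg _),
      ENNReal.toReal_ofReal hV₀.le] at h
  have hfin : S.Finite := by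
    by_contra hinf
    have hinf : S.Infinite := hinf
    set n : ℕ := ⌈(μ (ball y (R + r₀))).toReal / V₀⌉₊ + 1
    obtain ⟨F, hFS, hFcard⟩ := hinf.exists_subset_card_eq n
    have h := keyR F hFS
    rw [hFcard] at h
    have h2 : (μ (ball y (R + r₀))).toReal / V₀ ≤ ⌈(μ (ball y (R + r₀))).toReal / V₀⌉₊ :=
      Nat.le_ceil _
    have h3 : ((n : ℝ)) * V₀ > (μ (ball y (R + r₀))).toReal := by
      have : (μ (ball y (R + r₀))).toReal / V₀ < (n : ℝ) := by
        simp only [n]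
        push_cast
        linarith
      rw [div_lt_iff₀ hV₀] at this
      linarith
    linarith
  refine ⟨hfin, ?_⟩
  have h := keyR hfin.toFinset (by simp)
  rwa [← Set.ncard_eq_toFinset_card _ hfin] at h

lemma comp_lemma {X Y : Type*} [MetricSpace X] [MeasurableSpace X] [BorelSpace X]
    [MetricSpace Y] [MeasurableSpace Y] [BorelSpace Y]
    (ν : Measure X) (μ : Measure Y)
    (hbddX : ∀ s : Set X, Bornology.IsBounded s → ν s < ⊤)
    (hbddY : ∀ s : Set Y, Bornology.IsBounded s → μ s < ⊤)
    (K N : ℝ) (hN : 1 < N) (hBG : BishopGromov ν K N)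
    (r₀ V₀ V₁ : ℝ) (hr₀ : 0 < r₀) (hV₀ : 0 < V₀) (hV₁ : 0 < V₁)
    (hncX : ∀ p : X, (ν (ball p r₀)).toReal ≤ V₁)
    (hncY : ∀ q : Y, V₀ ≤ (μ (ball q r₀)).toReal)
    (x : X) (y : Y) (g : X → Y) (s A B : ℝ) (hs : r₀ ≤ s)
    (hsep : ∀ p q : X, s ≤ dist p q → 2 * r₀ ≤ dist (g p) (g q))
    (hrange : ∀ p : X, ∀ r : ℝ, dist x p < r → dist y (g p) ≤ A * r + B) :
    ∃ C > (0:ℝ), ∀ r > (0:ℝ),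
      (ν (ball x r)).toReal ≤ C * (μ (ball y (A * r + B + 1 + r₀))).toReal := by
  have hs0 : 0 < s := lt_of_lt_of_le hr₀ hs
  set Vs := V₁ * (Ivol K N s / Ivol K N r₀) with hVsdef
  have hVs : 0 < Vs :=
    mul_pos hV₁ (div_pos (Ivol_pos K N hN hs0) (Ivol_pos K N hN hr₀))
  refine ⟨Vs / V₀, div_pos hVs hV₀, ?_⟩
  intro r hr
  obtain ⟨S, hST, hSsep, hcover⟩ := maximal_net (ball x r) s hs0
  have himgsep : (g '' S).Pairwise fun p q => 2 * r₀ ≤ dist p q := by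
    rintro _ ⟨p, hp, rfl⟩ _ ⟨q, hq, rfl⟩ hne
    have hpq : p ≠ q := fun h => hne (by rw [h])
    exact hsep p q (hSsep hp hq hpq)
  have himgR : g '' S ⊆ ball y (A * r + B + 1) := by
    rintro _ ⟨p, hp, rfl⟩
    have h1 : dist y (g p) ≤ A * r + B := by
      apply hrange p r
      have := hST hp
      rwa [mem_ball, dist_comm] at this
    rw [mem_ball, dist_comm]
    linarith
  obtain ⟨hfinI, hcard⟩ := sep_count μ hbddY hr₀ hV₀ hncY (g '' S) himgsep y (A * r + B + 1) himgR
  have hginj : Set.InjOn g S := by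
    intro p hp q hq h
    by_contra hne
    have h2 := hsep p q (hSsep hp hq hne)
    rw [h, dist_self] at h2
    linarith
  have hfinS : S.Finite := Set.Finite.of_finite_image hfinI hginj
  have hcardeq : (g '' S).ncard = S.ncard := Set.ncard_image_of_injOn hginj
  have hball : ∀ p ∈ S, (ν (ball p s)).toReal ≤ Vs := by
    intro p _
    calc (ν (ball p s)).toReal ≤ (ν (ball p r₀)).toReal * (Ivol K N s / Ivol K N r₀) :=
          bg_upper ν K N hN hBG hr₀ hs p
    _ ≤ Vs := by
          rw [hVsdef]
          have h3 : 0 ≤ Ivol K N s / Ivol K N r₀ :=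
            (div_pos (Ivol_pos K N hN hs0) (Ivol_pos K N hN hr₀)).le
          exact mul_le_mul_of_nonneg_right (hncX p) h3
  have hcov : (ν (ball x r)).toReal ≤ (S.ncard : ℝ) * Vs := by
    have h1 : ν (ball x r) ≤ ∑ p ∈ hfinS.toFinset, ν (ball p s) := by
      refine le_trans (measure_mono ?_) (measure_biUnion_finset_le _ _)
      intro z hz
      obtain ⟨p, hp, hzp⟩ := by simpa using hcover hz
      simp only [Set.mem_iUnion]
      exact ⟨p, hfinS.mem_toFinset.mpr hp, hzp⟩
    have hne : ∀ p ∈ hfinS.toFinset, ν (ball p s) ≠ ⊤ :=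
      fun p _ => (hbddX _ isBounded_ball).ne
    have hsumne : (∑ p ∈ hfinS.toFinset, ν (ball p s)) ≠ ⊤ := by
      rw [ne_eq, ENNReal.sum_eq_top]
      push_neg
      intro p hp
      exact hne p hp
    calc (ν (ball x r)).toReal ≤ (∑ p ∈ hfinS.toFinset, ν (ball p s)).toReal :=
          ENNReal.toReal_mono hsumne h1
    _ = ∑ p ∈ hfinS.toFinset, (ν (ball p s)).toReal := ENNReal.toReal_sum hne
    _ ≤ hfinS.toFinset.card • Vs := by
          apply Finset.sum_le_card_nsmul
          intro p hp
          exact hball p (hfinS.mem_toFinset.mp hp)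
    _ = (S.ncard : ℝ) * Vs := by
          rw [nsmul_eq_mul, ← Set.ncard_eq_toFinset_card _ hfinS]
  rw [hcardeq] at hcard
  have hμfin : 0 ≤ (μ (ball y (A * r + B + 1 + r₀))).toReal := ENNReal.toReal_nonneg
  calc (ν (ball x r)).toReal ≤ (S.ncard : ℝ) * Vs := hcov
  _ ≤ ((μ (ball y (A * r + B + 1 + r₀))).toReal / V₀) * Vs := by
        apply mul_le_mul_of_nonneg_right _ hVs.le
        rw [le_div_iff₀ hV₀]
        exact hcard
  _ = Vs / V₀ * (μ (ball y (A * r + B + 1 + r₀))).toReal := by ring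

lemma sinh_le_exp (z : ℝ) : Real.sinh z ≤ Real.exp z := by
  rw [Real.sinh_eq]
  have h1 := Real.exp_pos (-z)
  have h2 := Real.exp_pos z
  linarith

lemma Ivol_le_exp (K N : ℝ) (hN : 1 < N) {r : ℝ} (hr1 : 1 ≤ r) :
    Ivol K N r ≤ Real.exp (((N - 1) * (Real.sqrt (|K| / (N - 1)) + 1) + 1) * r) := by
  set c₁ := (N - 1) * (Real.sqrt (|K| / (N - 1)) + 1) with hc₁def
  have hsq : 0 ≤ Real.sqrt (|K| / (N - 1)) := Real.sqrt_nonneg _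
  have hr0 : (0:ℝ) ≤ r := by linarith
  have hbound : ∀ t ∈ Set.uIoc (0:ℝ) r, ‖SKN K N t‖ ≤ Real.exp (c₁ * r) := by
    intro t ht
    rw [Set.uIoc_of_le hr0] at ht
    have ht0 : 0 < t := ht.1
    rw [Real.norm_eq_abs, abs_of_nonneg (skn_nonneg K N hN ht0.le)]
    unfold SKN
    split_ifs with hK0
    · calc t ^ (N - 1) ≤ r ^ (N - 1) := Real.rpow_le_rpow ht0.le ht.2 (by linarith)
      _ = Real.exp (Real.log r * (N - 1)) := by
          rw [Real.rpow_def_of_pos (by linarith)]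
      _ ≤ Real.exp (c₁ * r) := by
          apply Real.exp_le_exp.mpr
          have hlog : Real.log r ≤ r := by
            have := Real.log_le_sub_one_of_pos (show (0:ℝ) < r by linarith)
            linarith
          have hlog0 : 0 ≤ Real.log r := Real.log_nonneg hr1
          rw [hc₁def]
          nlinarith [mul_le_mul_of_nonneg_left hlog (show (0:ℝ) ≤ N - 1 by linarith),
            mul_nonneg (mul_nonneg (show (0:ℝ) ≤ N - 1 by linarith) hsq) hr0]
    · set c := Real.sqrt (|K| / (N - 1)) with hcdef
      have h1 : Real.sinh (c * t) ≤ Real.sinh (c * r) :=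
        Real.sinh_le_sinh.mpr (mul_le_mul_of_nonneg_left ht.2 hsq)
      have h0 : 0 ≤ Real.sinh (c * t) := Real.sinh_nonneg_iff.mpr (by positivity)
      calc Real.sinh (c * t) ^ (N - 1) ≤ Real.sinh (c * r) ^ (N - 1) :=
            Real.rpow_le_rpow h0 h1 (by linarith)
      _ ≤ Real.exp (c * r) ^ (N - 1) :=
            Real.rpow_le_rpow (le_trans h0 h1) (sinh_le_exp _) (by linarith)
      _ = Real.exp (c * r * (N - 1)) := (Real.exp_mul _ _).symm
      _ ≤ Real.exp (c₁ * r) := by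
            apply Real.exp_le_exp.mpr
            rw [hc₁def]
            nlinarith
  have hnorm := intervalIntegral.norm_integral_le_of_norm_le_const hbound
  have hI : Ivol K N r ≤ Real.exp (c₁ * r) * r := by
    calc Ivol K N r ≤ |Ivol K N r| := le_abs_self _
    _ = ‖∫ t in (0:ℝ)..r, SKN K N t‖ := rfl
    _ ≤ Real.exp (c₁ * r) * |r - 0| := hnorm
    _ = Real.exp (c₁ * r) * r := by rw [sub_zero, abs_of_nonneg hr0]
  have hrexp : r ≤ Real.exp r := by
    have := Real.add_one_le_exp r
    linarith
  calc Ivol K N r ≤ Real.exp (c₁ * r) * Real.exp r := by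
        apply le_trans hI
        exact mul_le_mul_of_nonneg_left hrexp (Real.exp_pos _).le
  _ = Real.exp ((c₁ + 1) * r) := by rw [← Real.exp_add]; ring_nf

lemma log_bound {X : Type*} [MetricSpace X] [MeasurableSpace X]
    (ν : Measure X)
    (hfull : ∀ x : X, ∀ r > (0:ℝ), 0 < ν (ball x r))
    (hbdd : ∀ s : Set X, Bornology.IsBounded s → ν s < ⊤)
    (K N : ℝ) (hN : 1 < N) (hBG : BishopGromov ν K N)
    (r₀ V₁ : ℝ) (hr₀ : 0 < r₀) (hnc : ∀ x : X, (ν (ball x r₀)).toReal ≤ V₁)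
    (x₀ : X) :
    Filter.IsBoundedUnder (· ≤ ·) Filter.atTop
      (fun r : ℝ => Real.log (ν (ball x₀ r)).toReal / r) := by
  set c₁ := (N - 1) * (Real.sqrt (|K| / (N - 1)) + 1) with hc₁def
  have hIr₀ : 0 < Ivol K N r₀ := Ivol_pos K N hN hr₀
  have hV₁pos : 0 < V₁ := by
    have h1 : 0 < (ν (ball x₀ r₀)).toReal :=
      ENNReal.toReal_pos (hfull x₀ r₀ hr₀).ne' (hbdd _ isBounded_ball).ne
    linarith [hnc x₀]
  apply Filter.isBoundedUnder_of_eventually_le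
    (a := |Real.log (V₁ / Ivol K N r₀)| + (c₁ + 1))
  filter_upwards [Filter.eventually_ge_atTop (max r₀ 1)] with r hr
  have hr1 : 1 ≤ r := le_trans (le_max_right _ _) hr
  have hrr₀ : r₀ ≤ r := le_trans (le_max_left _ _) hr
  have hrpos : 0 < r := by linarith
  have hvpos : 0 < (ν (ball x₀ r)).toReal :=
    ENNReal.toReal_pos (hfull x₀ r hrpos).ne' (hbdd _ isBounded_ball).ne
  have hvle : (ν (ball x₀ r)).toReal ≤ (V₁ / Ivol K N r₀) * Real.exp ((c₁ + 1) * r) := by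
    have h1 := bg_upper ν K N hN hBG hr₀ hrr₀ x₀
    have h2 := hnc x₀
    have h3 := Ivol_le_exp K N hN hr1
    have hIpos : 0 < Ivol K N r := Ivol_pos K N hN hrpos
    calc (ν (ball x₀ r)).toReal
        ≤ (ν (ball x₀ r₀)).toReal * (Ivol K N r / Ivol K N r₀) := h1
    _ ≤ V₁ * (Ivol K N r / Ivol K N r₀) :=
          mul_le_mul_of_nonneg_right h2 (by positivity)
    _ = (V₁ / Ivol K N r₀) * Ivol K N r := by ring
    _ ≤ (V₁ / Ivol K N r₀) * Real.exp ((c₁ + 1) * r) := by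
          apply mul_le_mul_of_nonneg_left _ (by positivity)
          rw [hc₁def]
          exact h3
  have hlog : Real.log (ν (ball x₀ r)).toReal ≤
      Real.log (V₁ / Ivol K N r₀) + (c₁ + 1) * r := by
    calc Real.log (ν (ball x₀ r)).toReal
        ≤ Real.log ((V₁ / Ivol K N r₀) * Real.exp ((c₁ + 1) * r)) :=
          Real.log_le_log hvpos hvle
    _ = Real.log (V₁ / Ivol K N r₀) + (c₁ + 1) * r := by
          rw [Real.log_mul (by positivity) (Real.exp_ne_zero _), Real.log_exp]
  have hstep : Real.log (ν (ball x₀ r)).toReal / r ≤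
      Real.log (V₁ / Ivol K N r₀) / r + (c₁ + 1) := by
    rw [div_add' _ _ _ hrpos.ne']
    apply div_le_div_of_nonneg_right _ hrpos.le
    linarith
  have habs : Real.log (V₁ / Ivol K N r₀) / r ≤ |Real.log (V₁ / Ivol K N r₀)| := by
    rw [div_le_iff₀ hrpos]
    nlinarith [le_abs_self (Real.log (V₁ / Ivol K N r₀)),
      abs_nonneg (Real.log (V₁ / Ivol K N r₀))]
  linarith

lemma poly_transfer {X Y : Type*} [MetricSpace X] [MeasurableSpace X]
    [MetricSpace Y] [MeasurableSpace Y]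
    (ν : Measure X) (μ : Measure Y) (x : X) (y : Y)
    (A B C : ℝ) (hA : 1 ≤ A) (hB : 0 ≤ B) (hC : 0 < C)
    (hcomp : ∀ r > (0:ℝ), (μ (ball y r)).toReal ≤ C * (ν (ball x (A * r + B))).toReal)
    (h : VolumePolyGrowth ν x) : VolumePolyGrowth μ y := by
  obtain ⟨C₀, hC₀, k, hk, r₁, hr₁, hpoly⟩ := h
  have hAB : 0 < A + B := by linarith
  refine ⟨C * C₀ * (A + B) ^ k, by positivity, k, hk, max 1 r₁,
    lt_of_lt_of_le one_pos (le_max_left _ _), ?_⟩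
  intro r hr
  have hr1 : 1 ≤ r := le_trans (le_max_left _ _) hr
  have hrr₁ : r₁ ≤ r := le_trans (le_max_right _ _) hr
  have hrpos : 0 < r := by linarith
  have h1 : r₁ ≤ A * r + B := by nlinarith
  have h2 := hpoly _ h1
  have h3 := hcomp r hrpos
  have h4 : (A * r + B) ^ k ≤ (A + B) ^ k * r ^ k := by
    rw [← Real.mul_rpow hAB.le hrpos.le]
    exact Real.rpow_le_rpow (by nlinarith) (by nlinarith) hk.le
  have h5 : (0:ℝ) ≤ (A * r + B) ^ k := Real.rpow_nonneg (by nlinarith) _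
  calc (μ (ball y r)).toReal ≤ C * (ν (ball x (A * r + B))).toReal := h3
  _ ≤ C * (C₀ * (A * r + B) ^ k) := mul_le_mul_of_nonneg_left h2 hC.le
  _ ≤ C * (C₀ * ((A + B) ^ k * r ^ k)) := by
        apply mul_le_mul_of_nonneg_left _ hC.le
        exact mul_le_mul_of_nonneg_left h4 hC₀.le
  _ = C * C₀ * (A + B) ^ k * r ^ k := by ring

lemma exp_transfer {X Y : Type*} [MetricSpace X] [MeasurableSpace X]
    [MetricSpace Y] [MeasurableSpace Y]
    (ν : Measure X) (μ : Measure Y) (x : X) (y : Y)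
    (hfullν : ∀ p : X, ∀ r > (0:ℝ), 0 < ν (ball p r))
    (hbddν : ∀ s : Set X, Bornology.IsBounded s → ν s < ⊤)
    (hfullμ : ∀ p : Y, ∀ r > (0:ℝ), 0 < μ (ball p r))
    (hbddμ : ∀ s : Set Y, Bornology.IsBounded s → μ s < ⊤)
    (A B C : ℝ) (hA : 1 ≤ A) (hB : 0 ≤ B) (hC : 0 < C)
    (hcomp : ∀ r > (0:ℝ), (ν (ball x r)).toReal ≤ C * (μ (ball y (A * r + B))).toReal)
    (hbound : Filter.IsBoundedUnder (· ≤ ·) Filter.atTop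
      (fun r : ℝ => Real.log (μ (ball y r)).toReal / r))
    (h : VolumeExpGrowth ν x) : VolumeExpGrowth μ y := by
  unfold VolumeExpGrowth at h ⊢
  set u : ℝ → ℝ := fun r => Real.log (ν (ball x r)).toReal / r with hudef
  have hν1 : 0 < (ν (ball x 1)).toReal :=
    ENNReal.toReal_pos (hfullν x 1 one_pos).ne' (hbddν _ isBounded_ball).ne
  have hmono : ∀ r : ℝ, 1 ≤ r → (ν (ball x 1)).toReal ≤ (ν (ball x r)).toReal := fun r hr =>
    ENNReal.toReal_mono (hbddν _ isBounded_ball).ne (measure_mono (ball_subset_ball hr))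
  have hcobdd : Filter.IsCoboundedUnder (· ≤ ·) Filter.atTop u := by
    apply Filter.IsBoundedUnder.isCoboundedUnder_le
    apply Filter.isBoundedUnder_of_eventually_ge
      (a := -|Real.log (ν (ball x 1)).toReal|)
    filter_upwards [Filter.eventually_ge_atTop (1:ℝ)] with r hr
    have hrpos : 0 < r := by linarith
    have hL : Real.log (ν (ball x 1)).toReal ≤ Real.log (ν (ball x r)).toReal :=
      Real.log_le_log hν1 (hmono r hr)
    set L := Real.log (ν (ball x r)).toReal with hLdef
    show -|Real.log (ν (ball x 1)).toReal| ≤ L / r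
    rcases le_or_gt 0 L with hL0 | hL0
    · have : 0 ≤ L / r := div_nonneg hL0 hrpos.le
      have := neg_abs_le (Real.log (ν (ball x 1)).toReal)
      nlinarith [abs_nonneg (Real.log (ν (ball x 1)).toReal)]
    · have h1 : L ≤ L / r := by
        rw [le_div_iff₀ hrpos]
        nlinarith
      have h2 := neg_abs_le (Real.log (ν (ball x 1)).toReal)
      linarith
  set Lsup := Filter.limsup u Filter.atTop with hLsdef
  have hlam : 0 < Lsup / 2 := by linarith
  have hfreq : ∃ᶠ r in Filter.atTop, Lsup / 2 < u r :=
    Filter.frequently_lt_of_lt_limsup hcobdd (by linarith)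
  set lam := Lsup / 2 with hlamdef
  set mu₀ := (lam / 2) / (A + B) with hmudef
  have hAB : 0 < A + B := by linarith
  have hmu₀ : 0 < mu₀ := div_pos (by linarith) hAB
  have hfreq2 : ∃ᶠ r in Filter.atTop,
      mu₀ ≤ (fun ρ => Real.log (μ (ball y ρ)).toReal / ρ) (A * r + B) := by
    have hcomb := hfreq.and_eventually
      (Filter.eventually_ge_atTop (max 1 (2 * |Real.log C| / lam)))
    apply hcomb.mono
    rintro r ⟨hur, hrR⟩
    have hr1 : 1 ≤ r := le_trans (le_max_left _ _) hrR
    have hrC : 2 * |Real.log C| / lam ≤ r := le_trans (le_max_right _ _) hrR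
    have hrpos : 0 < r := by linarith
    have hρpos : 0 < A * r + B := by nlinarith
    have hvμpos : 0 < (μ (ball y (A * r + B))).toReal :=
      ENNReal.toReal_pos (hfullμ y _ hρpos).ne' (hbddμ _ isBounded_ball).ne
    have hvνpos : 0 < (ν (ball x r)).toReal :=
      ENNReal.toReal_pos (hfullν x r hrpos).ne' (hbddν _ isBounded_ball).ne
    have hlogν : lam * r < Real.log (ν (ball x r)).toReal := by
      have h1 : lam < Real.log (ν (ball x r)).toReal / r := hur
      rw [lt_div_iff₀ hrpos] at h1
      linarith
    have h1 : Real.log (ν (ball x r)).toReal ≤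
        Real.log C + Real.log (μ (ball y (A * r + B))).toReal := by
      calc Real.log (ν (ball x r)).toReal
          ≤ Real.log (C * (μ (ball y (A * r + B))).toReal) :=
            Real.log_le_log hvνpos (hcomp r hrpos)
      _ = _ := Real.log_mul hC.ne' hvμpos.ne'
    have h2 : lam / 2 * r ≤ Real.log (μ (ball y (A * r + B))).toReal := by
      have habs : |Real.log C| ≤ lam / 2 * r := by
        rw [div_le_iff₀ hlam] at hrC
        nlinarith
      have h3 : Real.log C ≤ lam / 2 * r := le_trans (le_abs_self _) habs
      linarith
    show mu₀ ≤ Real.log (μ (ball y (A * r + B))).toReal / (A * r + B)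
    rw [le_div_iff₀ hρpos]
    have h4 : mu₀ * (A * r + B) ≤ mu₀ * ((A + B) * r) := by
      have h4' : A * r + B ≤ (A + B) * r := by nlinarith
      exact mul_le_mul_of_nonneg_left h4' hmu₀.le
    have h5 : mu₀ * ((A + B) * r) = lam / 2 * r := by
      rw [hmudef]
      field_simp
    linarith
  have htend : Filter.Tendsto (fun r : ℝ => A * r + B) Filter.atTop Filter.atTop := by
    apply Filter.tendsto_atTop_add_const_right
    exact Filter.Tendsto.const_mul_atTop (by linarith) Filter.tendsto_id
  have hfreq3 : ∃ᶠ ρ in Filter.atTop, mu₀ ≤ Real.log (μ (ball y ρ)).toReal / ρ :=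
    htend.frequently hfreq2
  have hfinal := Filter.le_limsup_of_frequently_le hfreq3 hbound
  linarith


theorem stmt_16 {X₁ X₂ : Type*} [MetricSpace X₁] [ProperSpace X₁]
    [MeasurableSpace X₁] [BorelSpace X₁]
    [MetricSpace X₂] [ProperSpace X₂] [MeasurableSpace X₂] [BorelSpace X₂]
    (hgeo₁ : IsGeodesicSpace X₁) (hgeo₂ : IsGeodesicSpace X₂)
    (ν₁ : Measure X₁) (ν₂ : Measure X₂)
    (hfull₁ : ∀ x : X₁, ∀ r > (0:ℝ), 0 < ν₁ (ball x r))
    (hfull₂ : ∀ x : X₂, ∀ r > (0:ℝ), 0 < ν₂ (ball x r))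
    (hbdd₁ : ∀ s : Set X₁, Bornology.IsBounded s → ν₁ s < ⊤)
    (hbdd₂ : ∀ s : Set X₂, Bornology.IsBounded s → ν₂ s < ⊤)
    (K N : ℝ) (hK : K ≤ 0) (hN : 1 < N)
    (hBG₁ : BishopGromov ν₁ K N) (hBG₂ : BishopGromov ν₂ K N)
    (r₀ V₀ V₁ : ℝ) (hr₀ : 0 < r₀) (hV₀ : 0 < V₀) (hV₁ : 0 < V₁)
    (hnc₁ : ∀ x : X₁, V₀ ≤ (ν₁ (ball x r₀)).toReal ∧ (ν₁ (ball x r₀)).toReal ≤ V₁)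
    (hnc₂ : ∀ x : X₂, V₀ ≤ (ν₂ (ball x r₀)).toReal ∧ (ν₂ (ball x r₀)).toReal ≤ V₁)
    (x₁ : X₁) (x₂ : X₂)
    (f : X₁ → X₂) (hf : IsRoughIsometry dist dist f) :
    (VolumePolyGrowth ν₁ x₁ ↔ VolumePolyGrowth ν₂ x₂) ∧
    (VolumeExpGrowth ν₁ x₁ ↔ VolumeExpGrowth ν₂ x₂) := by
  classical
  obtain ⟨⟨a, ha, b, hb, hbounds⟩, ε₁, hε₁, hdense⟩ := hf
  have ha0 : (0:ℝ) < a := by linarith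
  set φ : X₂ → X₁ := fun q => Classical.choose (hdense q) with hφdef
  have hφ : ∀ q : X₂, dist q (f (φ q)) ≤ ε₁ := fun q => Classical.choose_spec (hdense q)
  set D₀ := dist x₂ (f x₁) with hD₀def
  have hD₀ : 0 ≤ D₀ := dist_nonneg
  -- comparison 1 : v₁ ≤ C₁ v₂(a r + ...)
  have hs1 : r₀ ≤ a * (2 * r₀ + b) := by nlinarith
  have hsep1 : ∀ p q : X₁, a * (2 * r₀ + b) ≤ dist p q → 2 * r₀ ≤ dist (f p) (f q) := by
    intro p q hpq
    have h1 := (hbounds p q).1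
    have h3 : (1 / a) * (a * (2 * r₀ + b)) = 2 * r₀ + b := by field_simp
    have h4 := mul_le_mul_of_nonneg_left hpq (by positivity : (0:ℝ) ≤ 1 / a)
    linarith
  have hrange1 : ∀ p : X₁, ∀ r : ℝ, dist x₁ p < r → dist x₂ (f p) ≤ a * r + (D₀ + b) := by
    intro p r hpr
    have h1 := (hbounds x₁ p).2
    have h2 : dist x₂ (f p) ≤ D₀ + dist (f x₁) (f p) := by
      rw [hD₀def]
      exact dist_triangle x₂ (f x₁) (f p)
    have h3 := mul_le_mul_of_nonneg_left hpr.le ha0.le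
    linarith
  obtain ⟨C₁, hC₁, hcomp1⟩ := comp_lemma ν₁ ν₂ hbdd₁ hbdd₂ K N hN hBG₁ r₀ V₀ V₁ hr₀ hV₀ hV₁
    (fun p => (hnc₁ p).2) (fun q => (hnc₂ q).1) x₁ x₂ f (a * (2 * r₀ + b)) a (D₀ + b)
    hs1 hsep1 hrange1
  -- comparison 2 : v₂ ≤ C₂ v₁(a r + ...)
  have hs2 : r₀ ≤ 2 * ε₁ + b + a * (2 * r₀) := by nlinarith
  have hsep2 : ∀ p q : X₂, 2 * ε₁ + b + a * (2 * r₀) ≤ dist p q →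
      2 * r₀ ≤ dist (φ p) (φ q) := by
    intro p q hpq
    have h1 := (hbounds (φ p) (φ q)).2
    have h2 : dist p q ≤ dist p (f (φ p)) + dist (f (φ p)) (f (φ q)) + dist (f (φ q)) q :=
      dist_triangle4 p (f (φ p)) (f (φ q)) q
    have h3 := hφ p
    have h4 := hφ q
    rw [dist_comm (f (φ q)) q] at h2
    have h5 : a * (2 * r₀) ≤ a * dist (φ p) (φ q) := by linarith
    exact (mul_le_mul_iff_right₀ ha0).mp h5
  have hrange2 : ∀ p : X₂, ∀ r : ℝ, dist x₂ p < r →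
      dist x₁ (φ p) ≤ a * r + a * (D₀ + ε₁ + b) := by
    intro p r hpr
    have h1 := (hbounds x₁ (φ p)).1
    have h2 : dist (f x₁) (f (φ p)) ≤ D₀ + r + ε₁ := by
      calc dist (f x₁) (f (φ p)) ≤ dist (f x₁) x₂ + dist x₂ p + dist p (f (φ p)) :=
            dist_triangle4 _ _ _ _
      _ ≤ D₀ + r + ε₁ := by
            rw [dist_comm (f x₁) x₂, ← hD₀def]
            linarith [hφ p, hpr.le]
    have h4 : (1 / a) * dist x₁ (φ p) ≤ D₀ + r + ε₁ + b := by linarith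
    have h5 : dist x₁ (φ p) ≤ a * (D₀ + r + ε₁ + b) := by
      calc dist x₁ (φ p) = a * ((1 / a) * dist x₁ (φ p)) := by field_simp
      _ ≤ a * (D₀ + r + ε₁ + b) := mul_le_mul_of_nonneg_left h4 ha0.le
    calc dist x₁ (φ p) ≤ a * (D₀ + r + ε₁ + b) := h5
    _ = a * r + a * (D₀ + ε₁ + b) := by ring
  obtain ⟨C₂, hC₂, hcomp2⟩ := comp_lemma ν₂ ν₁ hbdd₂ hbdd₁ K N hN hBG₂ r₀ V₀ V₁ hr₀ hV₀ hV₁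
    (fun p => (hnc₂ p).2) (fun q => (hnc₁ q).1) x₂ x₁ φ (2 * ε₁ + b + a * (2 * r₀)) a
    (a * (D₀ + ε₁ + b)) hs2 hsep2 hrange2
  -- massage radii
  set B₁ := D₀ + b + 1 + r₀ with hB₁def
  set B₂ := a * (D₀ + ε₁ + b) + 1 + r₀ with hB₂def
  have hB₁ : 0 ≤ B₁ := by rw [hB₁def]; linarith
  have hB₂ : 0 ≤ B₂ := by
    rw [hB₂def]
    have := mul_nonneg ha0.le (by linarith : (0:ℝ) ≤ D₀ + ε₁ + b)
    linarith
  have hcomp1' : ∀ r > (0:ℝ), (ν₁ (ball x₁ r)).toReal ≤ C₁ * (ν₂ (ball x₂ (a * r + B₁))).toReal := by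
    intro r hr
    have h := hcomp1 r hr
    have heq : a * r + (D₀ + b) + 1 + r₀ = a * r + B₁ := by rw [hB₁def]; ring
    rwa [heq] at h
  have hcomp2' : ∀ r > (0:ℝ), (ν₂ (ball x₂ r)).toReal ≤ C₂ * (ν₁ (ball x₁ (a * r + B₂))).toReal := by
    intro r hr
    have h := hcomp2 r hr
    have heq : a * r + a * (D₀ + ε₁ + b) + 1 + r₀ = a * r + B₂ := by rw [hB₂def]; ring
    rwa [heq] at h
  have hlb₁ := log_bound ν₁ hfull₁ hbdd₁ K N hN hBG₁ r₀ V₁ hr₀ (fun p => (hnc₁ p).2) x₁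
  have hlb₂ := log_bound ν₂ hfull₂ hbdd₂ K N hN hBG₂ r₀ V₁ hr₀ (fun p => (hnc₂ p).2) x₂
  constructor
  · constructor
    · exact fun h => poly_transfer ν₁ ν₂ x₁ x₂ a B₂ C₂ ha hB₂ hC₂ hcomp2' h
    · exact fun h => poly_transfer ν₂ ν₁ x₂ x₁ a B₁ C₁ ha hB₁ hC₁ hcomp1' h
  · constructor
    · exact fun h => exp_transfer ν₁ ν₂ x₁ x₂ hfull₁ hbdd₁ hfull₂ hbdd₂ a B₁ C₁ ha hB₁ hC₁
        hcomp1' hlb₂ h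
    · exact fun h => exp_transfer ν₂ ν₁ x₂ x₁ hfull₂ hbdd₂ hfull₁ hbdd₁ a B₂ C₂ ha hB₂ hC₂
        hcomp2' hlb₁ h
end
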